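/- Let k ≥ 2 be an integer, let i = 1, and let r, s be positive integers. Then det A_k = s^{k-1}·(-1)^{(k-1)(k+6)/2}. -/

import Mathlib

/-- Auxiliary sequence: `genFibAux i k r s m` equals `F^i_{r,s}(k, m-1)`, i.e. the
four-parameters sequence indexed by `m = n + 1 ≥ 0`.  For `i ≤ k` the initial values
(`-1 ≤ n ≤ k-2`, i.e. `m < k`) are `r^⌊(n+1)/i⌋`, for `k < i` (`m < i`) they are
`s^⌊(n+1)/k⌋`, and for `n ≥ max{k,i} - 1` the recurrence
`F(n) = r·F(n-i) + s·F(n-k)` holds. -/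
def genFibAux (i k r s : ℕ) : ℕ → ℤ
  | m =>
    if m < max (max k i) 1 then
      if i ≤ k then (r : ℤ) ^ (m / i) else (s : ℤ) ^ (m / k)
    else
      r * genFibAux i k r s (m - max i 1) + s * genFibAux i k r s (m - max k 1)
  termination_by m => m
  decreasing_by all_goals omega

/-- The four-parameters sequence `F^i_{r,s}(k,n)` for integer `n ≥ -1`, with the
convention that it vanishes for `n ≤ -2`. -/
def genFib (i k r s : ℕ) (n : ℤ) : ℤ :=
  if n < -1 then 0 else genFibAux i k r s (n + 1).toNat

/-- The matrix `Q_k` (rows/columns indexed by `Fin k`, corresponding to the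
1-indexed rows/columns `1, …, k`): entry `1` at `(t, t+1)`; the first column has
entry `r` in row `i` and entry `s` in row `k` when `i < k`, and entry `r + s` in
row `k` when `i = k`; all other entries vanish. -/
def Qmat (i k r s : ℕ) : Matrix (Fin k) (Fin k) ℤ :=
  Matrix.of fun t j =>
    if (j : ℕ) = (t : ℕ) + 1 then 1
    else if (j : ℕ) = 0 then
      if i = k then (if (t : ℕ) = k - 1 then (r : ℤ) + s else 0)
      else if (t : ℕ) = i - 1 then (r : ℤ)
      else if (t : ℕ) = k - 1 then (s : ℤ)
      else 0
    else 0

/-- The matrix `A_k` of initial conditions: its `(t, j)` entry (1-indexed) is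
`F^i_{r,s}(k, 2k-1-t-j)`. -/
def Amat (i k r s : ℕ) : Matrix (Fin k) (Fin k) ℤ :=
  Matrix.of fun t j =>
    genFib i k r s (2 * (k : ℤ) - 3 - ((t : ℕ) : ℤ) - ((j : ℕ) : ℤ))

open Equiv Matrix

section AuxLemmas

/-- Closed form for the sequence with `i = 1` in the range `m ≤ 2k-2`. -/
lemma genFibAux_one_eq (k r s : ℕ) (hk : 1 ≤ k) : ∀ m, m ≤ 2*k-2 →
    genFibAux 1 k r s m = (r:ℤ)^m + ((m+1-k : ℕ) : ℤ) * s * (r:ℤ)^(m-k) := by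
  intro m
  induction m using Nat.strong_induction_on with
  | _ m ih =>
    intro hm
    rw [genFibAux]
    have hmax : max (max k 1) 1 = k := by omega
    rw [hmax]
    by_cases h : m < k
    · rw [if_pos h, if_pos hk]
      have h0 : m + 1 - k = 0 := by omega
      simp [h0, Nat.div_one]
    · rw [if_neg h]
      push_neg at h
      have h1 : max (1:ℕ) 1 = 1 := by omega
      have h2 : max k 1 = k := by omega
      rw [h1, h2]
      rw [ih (m-1) (by omega) (by omega), ih (m-k) (by omega) (by omega)]
      have e1 : m - k + 1 - k = 0 := by omega
      rw [e1]
      rcases Nat.eq_or_lt_of_le h with h' | h'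
      · have e2 : m - 1 + 1 - k = 0 := by omega
        have e3 : m + 1 - k = 1 := by omega
        have e4 : m - k = 0 := by omega
        have e5 : m - 1 = k - 1 := by omega
        rw [e2, e3, e4, e5]
        have hr : (r:ℤ) * (r:ℤ)^(k-1) = (r:ℤ)^m := by
          rw [← pow_succ']; congr 1; omega
        push_cast
        linear_combination hr
      · have e2 : m - 1 + 1 - k = m - k := by omega
        have e3 : m - 1 - k = m - k - 1 := by omega
        rw [e2, e3]
        have hr1 : (r:ℤ) * (r:ℤ)^(m-1) = (r:ℤ)^m := by
          rw [← pow_succ']; congr 1; omega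
        have hr2 : (r:ℤ) * (r:ℤ)^(m-k-1) = (r:ℤ)^(m-k) := by
          rw [← pow_succ']; congr 1; omega
        have e4 : (((m+1-k : ℕ)) : ℤ) = ((m-k : ℕ) : ℤ) + 1 := by omega
        rw [e4]
        linear_combination hr1 + ((m-k : ℕ) : ℤ) * (s:ℤ) * hr2

/-- Closed form for the entries of `Amat 1 k r s`. -/
lemma Amat_apply_eq (k r s : ℕ) (hk : 2 ≤ k) (t j : Fin k) :
    Amat 1 k r s t j = (r:ℤ)^(2*k-2-(t:ℕ)-(j:ℕ))
      + ((2*k-2-(t:ℕ)-(j:ℕ)+1-k : ℕ) : ℤ) * s * (r:ℤ)^(2*k-2-(t:ℕ)-(j:ℕ)-k) := by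
  have ht : (t:ℕ) < k := t.isLt
  have hj : (j:ℕ) < k := j.isLt
  show genFib 1 k r s (2 * (k:ℤ) - 3 - ((t:ℕ):ℤ) - ((j:ℕ):ℤ)) = _
  rw [genFib, if_neg (by omega)]
  have harg : (2 * (k:ℤ) - 3 - ((t:ℕ):ℤ) - ((j:ℕ):ℤ) + 1).toNat
      = 2*k-2-(t:ℕ)-(j:ℕ) := by omega
  rw [harg, genFibAux_one_eq k r s (by omega) _ (by omega)]

/-- The shift matrix used for the column operations. -/
def Tmat (k : ℕ) : Matrix (Fin k) (Fin k) ℤ :=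
  Matrix.of fun t j => if (t:ℕ) = (j:ℕ)+1 then 1 else 0

/-- The result of the column operations on `Amat`. -/
def Mmat (k r s : ℕ) : Matrix (Fin k) (Fin k) ℤ :=
  Matrix.of fun t j =>
    if (j:ℕ) = k-1 then (r:ℤ)^(k-1-(t:ℕ))
    else if (t:ℕ)+(j:ℕ) ≤ k-2 then (s:ℤ)*(r:ℤ)^(k-2-(t:ℕ)-(j:ℕ))
    else 0

lemma det_one_sub_smul_Tmat (k r : ℕ) : (1 - (r:ℤ) • Tmat k).det = 1 := by
  rw [Matrix.det_of_lowerTriangular _ ?ht]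
  case ht =>
    intro i j hij
    have h : (i : Fin k) < j := hij
    have : ¬ ((i:ℕ) = (j:ℕ)+1) := by
      have := (Fin.lt_iff_val_lt_val).mp h
      omega
    simp [Tmat, Matrix.one_apply, this, Fin.ext_iff]
    omega
  · apply Finset.prod_eq_one
    intro i _
    simp [Tmat, Matrix.one_apply]

lemma Amat_mul_Tmat_apply (k r s : ℕ) (t j : Fin k) :
    (Amat 1 k r s * Tmat k) t j
      = if h : (j:ℕ)+1 < k then Amat 1 k r s t ⟨(j:ℕ)+1, h⟩ else 0 := by
  rw [Matrix.mul_apply]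
  split
  · next h =>
    rw [Finset.sum_eq_single (⟨(j:ℕ)+1, h⟩ : Fin k)]
    · simp [Tmat]
    · intro x _ hx
      have : ¬ ((x:ℕ) = (j:ℕ)+1) := fun hc => hx (Fin.ext hc)
      simp [Tmat, this]
    · simp
  · next h =>
    apply Finset.sum_eq_zero
    intro x _
    have : ¬ ((x:ℕ) = (j:ℕ)+1) := by have := x.isLt; omega
    simp [Tmat, this]

lemma Amat_mul_eq_Mmat (k r s : ℕ) (hk : 2 ≤ k) :
    Amat 1 k r s * (1 - (r:ℤ) • Tmat k) = Mmat k r s := by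
  ext t j
  rw [Matrix.mul_sub, Matrix.mul_one, Matrix.mul_smul, Matrix.sub_apply,
    Matrix.smul_apply, smul_eq_mul, Amat_mul_Tmat_apply]
  have ht : (t:ℕ) < k := t.isLt
  have hj : (j:ℕ) < k := j.isLt
  show _ = Mmat k r s t j
  unfold Mmat
  by_cases hjk : (j:ℕ) = k-1
  · rw [dif_neg (by omega)]
    simp only [Matrix.of_apply, hjk, if_pos rfl]
    rw [Amat_apply_eq k r s hk]
    have e1 : 2*k-2-(t:ℕ)-(j:ℕ)+1-k = 0 := by omega
    have e2 : 2*k-2-(t:ℕ)-(j:ℕ) = k-1-(t:ℕ) := by omega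
    rw [e1, e2]
    simp
  · rw [dif_pos (by omega)]
    rw [Amat_apply_eq k r s hk, Amat_apply_eq k r s hk]
    simp only [Matrix.of_apply, if_neg hjk]
    set a := (t:ℕ); set b := (j:ℕ)
    by_cases hab : a + b ≤ k-2
    · rw [if_pos hab]
      rcases Nat.eq_or_lt_of_le hab with h' | h'
      · have e1 : 2*k-2-a-b = k := by omega
        have e2 : 2*k-2-a-(b+1) = k-1 := by omega
        have e3 : 2*k-2-a-b+1-k = 1 := by omega
        have e4 : 2*k-2-a-b-k = 0 := by omega
        have e5 : 2*k-2-a-(b+1)+1-k = 0 := by omega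
        have e6 : k-2-a-b = 0 := by omega
        rw [e5, e3, e4, e6, e2, e1]
        have hr : (r:ℤ) * (r:ℤ)^(k-1) = (r:ℤ)^k := by
          rw [← pow_succ']; congr 1; omega
        push_cast
        linear_combination -hr
      · have e1 : 2*k-2-a-(b+1) = 2*k-2-a-b-1 := by omega
        have e2 : 2*k-2-a-b+1-k = (2*k-2-a-b-k)+1 := by omega
        have e3 : 2*k-2-a-(b+1)+1-k = 2*k-2-a-b-k := by omega
        have e4 : 2*k-2-a-(b+1)-k = 2*k-2-a-b-k-1 := by omega
        have e5 : k-2-a-b = 2*k-2-a-b-k := by omega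
        rw [e2, e3, e4, e5, e1]
        have hr1 : (r:ℤ) * (r:ℤ)^(2*k-2-a-b-1) = (r:ℤ)^(2*k-2-a-b) := by
          rw [← pow_succ']; congr 1; omega
        have hr2 : (r:ℤ) * (r:ℤ)^(2*k-2-a-b-k-1) = (r:ℤ)^(2*k-2-a-b-k) := by
          rw [← pow_succ']; congr 1; omega
        push_cast
        linear_combination -hr1 - ((2*k-2-a-b-k : ℕ) : ℤ) * (s:ℤ) * hr2
    · rw [if_neg hab]
      have e1 : 2*k-2-a-b+1-k = 0 := by omega
      have e2 : 2*k-2-a-(b+1)+1-k = 0 := by omega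
      have e3 : 2*k-2-a-(b+1) = 2*k-2-a-b-1 := by omega
      rw [e1, e2, e3]
      have hr1 : (r:ℤ) * (r:ℤ)^(2*k-2-a-b-1) = (r:ℤ)^(2*k-2-a-b) := by
        rw [← pow_succ']; congr 1; omega
      push_cast
      linear_combination -hr1

lemma revPerm_decompose (n : ℕ) :
    (Fin.revPerm : Perm (Fin (n+1))) =
      Equiv.Perm.decomposeFin.symm (Fin.last n, Fin.revPerm * finRotate n) := by
  ext i
  refine Fin.cases ?_ (fun x => ?_) i
  · simp
  · rw [Equiv.Perm.decomposeFin_symm_apply_succ]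
    rcases x with ⟨x, hx⟩
    rcases Nat.lt_or_ge (x+1) n with h | h
    · have : (finRotate n) ⟨x, hx⟩ = ⟨x+1, h⟩ := by
        rcases n with _ | m
        · omega
        · exact finRotate_of_lt (by omega)
      rw [Perm.mul_apply, this]
      simp only [Fin.revPerm_apply]
      rw [swap_apply_of_ne_of_ne]
      · simp [Fin.ext_iff, Fin.rev, Fin.val_succ]
        omega
      · simp [Fin.ext_iff, Fin.rev]
      · simp [Fin.ext_iff, Fin.rev]
        omega
    · have hn : n = x + 1 := by omega
      subst hn
      have : (finRotate (x+1)) ⟨x, hx⟩ = ⟨0, by omega⟩ := finRotate_last'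
      rw [Perm.mul_apply, this]
      simp only [Fin.revPerm_apply]
      have h1 : (Fin.rev ⟨0, by omega⟩ : Fin (x+1)) = ⟨x, by omega⟩ := by
        simp [Fin.ext_iff, Fin.rev]
      rw [h1]
      have h2 : Fin.succ (⟨x, by omega⟩ : Fin (x+1)) = Fin.last (x+1) := by
        simp [Fin.ext_iff]
      rw [h2, swap_apply_right]
      simp [Fin.ext_iff, Fin.rev]

lemma sign_revPerm (n : ℕ) :
    Equiv.Perm.sign (Fin.revPerm : Perm (Fin n)) = (-1) ^ (n * (n-1) / 2) := by
  induction n with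
  | zero =>
    rw [show (Fin.revPerm : Perm (Fin 0)) = 1 from Subsingleton.elim _ _]
    simp
  | succ n ih =>
    rw [revPerm_decompose]
    rw [Equiv.Perm.decomposeFin.symm_sign]
    rcases Nat.eq_zero_or_pos n with h | h
    · subst h
      rw [show Fin.revPerm * finRotate 0 = 1 from Subsingleton.elim _ _,
          _root_.map_one, mul_one, if_pos (by decide)]
      norm_num
    · obtain ⟨m, rfl⟩ : ∃ m, n = m + 1 := ⟨n - 1, by omega⟩
      rw [if_neg (by simp [Fin.ext_iff]), _root_.map_mul, ih, sign_finRotate]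
      rw [← pow_add]
      have h2 : ((m+1+1) * (m+1+1-1) / 2) = ((m+1) * (m+1-1) / 2 + m) + 1 := by
        have : (m+1+1) * (m+1+1-1) = (m+1) * (m+1-1) + 2*(m+1) := by
          simp only [Nat.add_sub_cancel]; ring
        omega
      rw [h2, pow_succ]
      exact mul_comm _ _

lemma finRotate_inv_val (m : ℕ) (j : Fin (m+1)) :
    (((finRotate (m+1))⁻¹ j : Fin (m+1)) : ℕ) = if (j:ℕ) = 0 then m else (j:ℕ) - 1 := by
  set i := (finRotate (m+1))⁻¹ j with hi
  have h : finRotate (m+1) i = j := Equiv.apply_symm_apply _ _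
  have h2 : ((finRotate (m+1) i : Fin (m+1)) : ℕ) = if i = Fin.last m then 0 else (i:ℕ)+1 :=
    coe_finRotate i
  rw [h] at h2
  have h3 : i = Fin.last m ↔ (i:ℕ) = m := by
    rw [Fin.ext_iff, Fin.val_last]
  simp only [h3] at h2
  have hi1 : (i:ℕ) < m+1 := i.isLt
  have hj1 : (j:ℕ) < m+1 := j.isLt
  split_ifs at h2 ⊢ <;> omega

lemma Mmat_det (m r s : ℕ) (hm : 1 ≤ m) :
    ((Equiv.Perm.sign (Fin.revPerm : Perm (Fin (m+1))) : ℤ)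
      * ((-1:ℤ)^m)) * (Mmat (m+1) r s).det = (s:ℤ)^m := by
  set σ : Perm (Fin (m+1)) := (finRotate (m+1))⁻¹ with hσ
  have hPdet : ((Mmat (m+1) r s).submatrix Fin.revPerm σ).det = (s:ℤ)^m := by
    have hdiag : ∀ t : Fin (m+1),
        ((Mmat (m+1) r s).submatrix Fin.revPerm σ) t t = if (t:ℕ) = 0 then 1 else (s:ℤ) := by
      intro t
      show Mmat (m+1) r s (Fin.revPerm t) (σ t) = _
      have hσv : ((σ t : Fin (m+1)) : ℕ) = if (t:ℕ) = 0 then m else (t:ℕ) - 1 :=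
        finRotate_inv_val m t
      have hrv : ((Fin.revPerm t : Fin (m+1)) : ℕ) = m - (t:ℕ) := by
        simp [Fin.val_rev]
      have htl : (t:ℕ) < m+1 := t.isLt
      rcases Nat.eq_zero_or_pos (t:ℕ) with h0 | h0
      · rw [if_pos h0] at hσv
        rw [if_pos h0]
        unfold Mmat
        simp only [Matrix.of_apply, hrv, hσv, h0]
        rw [if_pos (by omega)]
        have e : m+1-1-(m-0) = 0 := by omega
        rw [e, pow_zero]
      · rw [if_neg (by omega)] at hσv
        rw [if_neg (by omega)]
        unfold Mmat
        simp only [Matrix.of_apply, hrv, hσv]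
        rw [if_neg (by omega), if_pos (by omega)]
        have e : m+1-2-(m-(t:ℕ))-((t:ℕ)-1) = 0 := by omega
        rw [e, pow_zero, mul_one]
    rw [Matrix.det_of_lowerTriangular _ ?ht]
    case ht =>
      intro t j hij
      have hlt : (t:ℕ) < (j:ℕ) := hij
      have hj0 : (j:ℕ) ≠ 0 := by omega
      have hjl : (j:ℕ) < m+1 := j.isLt
      show Mmat (m+1) r s (Fin.revPerm t) (σ j) = 0
      have hσv : ((σ j : Fin (m+1)) : ℕ) = (j:ℕ) - 1 := by
        rw [hσ, finRotate_inv_val, if_neg hj0]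
      have hrv : ((Fin.revPerm t : Fin (m+1)) : ℕ) = m - (t:ℕ) := by
        simp [Fin.val_rev]
      unfold Mmat
      simp only [Matrix.of_apply, hσv, hrv]
      rw [if_neg (by omega), if_neg (by omega)]
    · rw [Finset.prod_congr rfl (fun t _ => hdiag t), Fin.prod_univ_succ]
      simp only [Fin.val_zero, if_pos rfl, Fin.val_succ]
      have : ∀ i : Fin m, (if (i:ℕ)+1 = 0 then (1:ℤ) else (s:ℤ)) = (s:ℤ) := by
        intro i; rw [if_neg (by omega)]
      rw [Finset.prod_congr rfl (fun i _ => this i), Finset.prod_const,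
        Finset.card_univ, Fintype.card_fin]
      simp
  have hsub : (Mmat (m+1) r s).submatrix Fin.revPerm σ
      = ((Mmat (m+1) r s).submatrix id σ).submatrix Fin.revPerm id := by
    rw [Matrix.submatrix_submatrix]
    rfl
  rw [hsub, Matrix.det_permute, Matrix.det_permute'] at hPdet
  rw [hσ] at hPdet
  rw [map_inv, sign_finRotate] at hPdet
  have hu : (((-1 : ℤˣ) ^ m)⁻¹ : ℤˣ) = (-1)^m := by
    have h1 : (-1 : ℤˣ)⁻¹ = -1 := by decide
    rw [← inv_pow, h1]
  rw [Nat.add_sub_cancel, hu] at hPdet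
  rw [← hPdet]
  push_cast
  ring

end AuxLemmas

/-- For an integer `k ≥ 2`, `i = 1`, and positive integers
`r, s`, `det A_k = s^{k-1}·(-1)^{(k-1)(k+6)/2}`. -/
theorem Amat_det (k r s : ℕ) (hk : 2 ≤ k) (hr : 0 < r) (hs : 0 < s) :
    (Amat 1 k r s).det = (s : ℤ) ^ (k - 1) * (-1) ^ ((k - 1) * (k + 6) / 2) := by
  obtain ⟨m, rfl⟩ : ∃ m, k = m + 1 := ⟨k - 1, by omega⟩
  have hm : 1 ≤ m := by omega
  -- det A = det M
  have hdet1 : (Amat 1 (m+1) r s).det = (Mmat (m+1) r s).det := by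
    have := congrArg Matrix.det (Amat_mul_eq_Mmat (m+1) r s hk)
    rwa [Matrix.det_mul, det_one_sub_smul_Tmat, mul_one] at this
  -- the sign
  set ε : ℤ := (-1:ℤ) ^ ((m+1) * m / 2 + m) with hε
  have hsign : ((Equiv.Perm.sign (Fin.revPerm : Perm (Fin (m+1))) : ℤ) * ((-1:ℤ)^m)) = ε := by
    rw [sign_revPerm]
    have e : (m+1) * (m+1-1) / 2 = (m+1) * m / 2 := by
      simp only [Nat.add_sub_cancel]
    rw [e]
    push_cast
    rw [← pow_add]
  have hM := Mmat_det m r s hm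
  rw [hsign] at hM
  have hee : ε * ε = 1 := by
    rw [hε, ← pow_add, Even.neg_one_pow ⟨(m+1) * m / 2 + m, rfl⟩]
  have hdet2 : (Mmat (m+1) r s).det = ε * (s:ℤ)^m := by
    calc (Mmat (m+1) r s).det = (ε * ε) * (Mmat (m+1) r s).det := by rw [hee, one_mul]
    _ = ε * (ε * (Mmat (m+1) r s).det) := by ring
    _ = ε * (s:ℤ)^m := by rw [hM]
  -- final exponent arithmetic
  have hexp : (m+1+6 : ℕ) = m + 7 := by omega
  have e1 : (m+1-1) = m := by omega
  rw [hdet1, hdet2, e1, hexp]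
  have heq : ε = (-1:ℤ) ^ (m * (m+7) / 2) := by
    obtain ⟨c, hc⟩ := Nat.even_mul_succ_self m
    have hcomm : (m+1) * m = m * (m+1) := by ring
    have h6 : m * (m+7) = m * (m+1) + 6 * m := by ring
    have he2 : m * (m+7) / 2 = ((m+1) * m / 2 + m) + 2 * m := by omega
    have hsplit : (-1:ℤ) ^ (m * (m+7) / 2)
        = (-1:ℤ) ^ ((m+1) * m / 2 + m) * ((-1:ℤ)^2)^m := by
      rw [he2, pow_add, pow_mul]
    rw [hsplit, hε]
    norm_num
  rw [heq]
  ring
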